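/- Let ≤ be a rooted tree order on a finite vertex set V (a partial order with a greatest element in which the strict upper bounds of every element form a chain), and let G be its comparability graph: distinct u, w are adjacent iff u < w or w < u. Let θ be a second-order stationary point of the Kuramoto energy E_G. Then for every non-maximal vertex A (i.e., a vertex whose set of strict ancestors Anc(A) = {u : A < u} is nonempty), one has v_A + Σ_{j ∈ Anc(A)} v_j ≠ 0, where v_k = (cos θ_k, sin θ_k) is the phasor of vertex k. -/

import Mathlib

open Finset

/-- The phasor of vertex `i` at state `θ`: the unit vector `(cos θᵢ, sin θᵢ) ∈ ℝ²`. -/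
noncomputable def phasor {V : Type*} (θ : V → ℝ) (i : V) : ℝ × ℝ :=
  (Real.cos (θ i), Real.sin (θ i))

/-- The Kuramoto energy `E_G(θ) = (1/2)·Σ_{i,j} A_{ij}(1 − cos(θ_i − θ_j))`. -/
noncomputable def kuramotoEnergy {V : Type*} [Fintype V] (G : SimpleGraph V)
    [DecidableRel G.Adj] (θ : V → ℝ) : ℝ :=
  (1 / 2) * ∑ i, ∑ j, (if G.Adj i j then (1 : ℝ) else 0) * (1 - Real.cos (θ i - θ j))

/-- The Hessian of the Kuramoto energy at `θ`: off-diagonal entries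
`−A_{ij} cos(θ_i − θ_j)` and diagonal entries `Σ_{k ≠ i} A_{ik} cos(θ_i − θ_k)`. -/
noncomputable def kuramotoHessian {V : Type*} [Fintype V] [DecidableEq V] (G : SimpleGraph V)
    [DecidableRel G.Adj] (θ : V → ℝ) : Matrix V V ℝ :=
  Matrix.of fun i j =>
    if i = j then ∑ k ∈ Finset.univ.erase i, (if G.Adj i k then Real.cos (θ i - θ k) else 0)
    else -(if G.Adj i j then Real.cos (θ i - θ j) else 0)

/-- `θ` is a second-order stationary point of the Kuramoto energy: the gradient
`(∇E_G(θ))_i = Σ_j A_{ij} sin(θ_i − θ_j)` vanishes and the Hessian is positive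
semidefinite. -/
def IsSOSP {V : Type*} [Fintype V] [DecidableEq V] (G : SimpleGraph V)
    [DecidableRel G.Adj] (θ : V → ℝ) : Prop :=
  (∀ i, ∑ j, (if G.Adj i j then (1 : ℝ) else 0) * Real.sin (θ i - θ j) = 0) ∧
  (kuramotoHessian G θ).PosSemidef

/-- The comparability graph of a partial order: distinct `u, w` are adjacent iff
`u < w` or `w < u`. -/
def comparabilityGraph (V : Type*) [PartialOrder V] : SimpleGraph V where
  Adj u w := u < w ∨ w < u
  symm := ⟨fun _ _ h => Or.symm h⟩
  loopless := ⟨fun u h => by rcases h with h | h <;> exact lt_irrefl u h⟩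

instance {V : Type*} [PartialOrder V] [DecidableRel ((· < ·) : V → V → Prop)] :
    DecidableRel (comparabilityGraph V).Adj :=
  fun u w => inferInstanceAs (Decidable (u < w ∨ w < u))

/-- On the comparability graph of a rooted tree order (a partial order with a greatest
element whose sets of strict upper bounds are chains), at a second-order stationary point
`θ` of the Kuramoto energy, for every non-maximal vertex `A` one has
`v_A + Σ_{j ∈ Anc(A)} v_j ≠ 0`. -/
theorem stmt_11 {V : Type*} [Fintype V] [DecidableEq V] [PartialOrder V]
    [DecidableRel ((· < ·) : V → V → Prop)]
    (hroot : ∃ r : V, ∀ v : V, v ≤ r)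
    (hchain : ∀ v : V, IsChain (· ≤ ·) {u : V | v < u})
    (θ : V → ℝ) (hθ : IsSOSP (comparabilityGraph V) θ)
    (A : V) (hA : {u : V | A < u}.Nonempty) :
    phasor θ A + ∑ j ∈ Finset.univ.filter (fun u => A < u), phasor θ j ≠ 0 := by
  haveI : DecidablePred (fun v : V => v ≤ A) := fun v =>
    decidable_of_iff (v < A ∨ v = A) le_iff_lt_or_eq.symm
  intro h0
  obtain ⟨hgrad, hpsd⟩ := hθ
  have hcos : ∑ j ∈ Finset.univ.filter (fun u => A < u), Real.cos (θ j) = -Real.cos (θ A) := by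
    have h1 := congrArg Prod.fst h0
    simp only [Prod.fst_add, Prod.fst_sum, phasor, Prod.fst_zero] at h1
    linarith
  have hsin : ∑ j ∈ Finset.univ.filter (fun u => A < u), Real.sin (θ j) = -Real.sin (θ A) := by
    have h1 := congrArg Prod.snd h0
    simp only [Prod.snd_add, Prod.snd_sum, phasor, Prod.snd_zero] at h1
    linarith
  have key : ∀ i : V, ∑ j ∈ Finset.univ.filter (fun u => A < u), Real.cos (θ i - θ j)
      = -Real.cos (θ i - θ A) := by
    intro i
    simp only [Real.cos_sub]
    rw [Finset.sum_add_distrib, ← Finset.mul_sum, ← Finset.mul_sum, hcos, hsin]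
    ring
  have hadj : ∀ i k : V, i ≤ A → ¬ k ≤ A →
      ((comparabilityGraph V).Adj i k ↔ A < k) := by
    intro i k hi hk
    constructor
    · rintro (h | h)
      · rcases eq_or_lt_of_le hi with rfl | hiA
        · exact h
        · have hAk : A ≠ k := fun h' => hk h'.ge
          rcases hchain i hiA h hAk with h' | h'
          · exact lt_of_le_of_ne h' hAk
          · exact absurd h' hk
      · exact absurd (h.le.trans hi) hk
    · intro hAk
      exact Or.inl (lt_of_le_of_lt hi hAk)
  set M := kuramotoHessian (comparabilityGraph V) θ with hM
  set T : Finset V := Finset.univ.filter (fun v => v ≤ A) with hT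
  have hAT : A ∈ T := by simp [hT]
  -- the row sums over T
  have hrow : ∀ i ∈ T, ∑ j ∈ T, M i j = -Real.cos (θ i - θ A) := by
    intro i hiT
    have hi : i ≤ A := by simpa [hT] using hiT
    have h1 : ∑ j ∈ T, M i j = M i i + ∑ j ∈ T.erase i, M i j :=
      (Finset.add_sum_erase T _ hiT).symm
    have h2 : ∑ j ∈ T.erase i, M i j
        = -∑ j ∈ T.erase i, (if (comparabilityGraph V).Adj i j then Real.cos (θ i - θ j) else 0) := by
      rw [← Finset.sum_neg_distrib]
      refine Finset.sum_congr rfl fun j hj => ?_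
      have hji : i ≠ j := fun h => (Finset.mem_erase.mp hj).1 h.symm
      simp [hM, kuramotoHessian, hji]
    have hMi : M i i = ∑ k ∈ Finset.univ.erase i,
        (if (comparabilityGraph V).Adj i k then Real.cos (θ i - θ k) else 0) := by
      simp [hM, kuramotoHessian]
    have hsub : T.erase i ⊆ Finset.univ.erase i := by
      intro k hk
      exact Finset.mem_erase.mpr ⟨(Finset.mem_erase.mp hk).1, Finset.mem_univ k⟩
    have h3 : ∑ k ∈ (Finset.univ.erase i) \ (T.erase i),
          (if (comparabilityGraph V).Adj i k then Real.cos (θ i - θ k) else 0)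
        + ∑ k ∈ T.erase i,
          (if (comparabilityGraph V).Adj i k then Real.cos (θ i - θ k) else 0)
        = ∑ k ∈ Finset.univ.erase i,
          (if (comparabilityGraph V).Adj i k then Real.cos (θ i - θ k) else 0) :=
      Finset.sum_sdiff hsub
    have hset : (Finset.univ.erase i) \ (T.erase i)
        = Finset.univ.filter (fun k => ¬ k ≤ A) := by
      ext k
      simp only [Finset.mem_sdiff, Finset.mem_erase, Finset.mem_univ, Finset.mem_filter,
        true_and, and_true, hT, not_and]
      constructor
      · rintro ⟨hki, hk⟩
        exact hk hki
      · intro hk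
        exact ⟨fun h => hk (h ▸ hi), fun _ => hk⟩
    have h4 : ∑ k ∈ Finset.univ.filter (fun k => ¬ k ≤ A),
          (if (comparabilityGraph V).Adj i k then Real.cos (θ i - θ k) else 0)
        = ∑ k ∈ Finset.univ.filter (fun u => A < u), Real.cos (θ i - θ k) := by
      rw [Finset.sum_filter, Finset.sum_filter]
      refine Finset.sum_congr rfl fun k _ => ?_
      by_cases hkA : k ≤ A
      · have hnlt : ¬ A < k := fun h => absurd (h.trans_le hkA) (lt_irrefl A)
        simp [hkA, hnlt]
      · simp [hkA, hadj i k hi hkA]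
    rw [h1, h2, hMi, ← h3, hset, h4, key i]
    ring
  -- value of the quadratic form on the indicator of T
  have hQval : ∑ i ∈ T, ∑ j ∈ T, M i j
      = -1 - ∑ k ∈ T.erase A, Real.cos (θ k - θ A) := by
    rw [Finset.sum_congr rfl hrow, ← Finset.add_sum_erase T _ hAT, sub_self, Real.cos_zero,
      Finset.sum_neg_distrib]
    ring
  -- the diagonal entry at A
  have hdiagval : M A A = -1 + ∑ k ∈ T.erase A, Real.cos (θ A - θ k) := by
    have hMA : M A A = ∑ k ∈ Finset.univ.erase A,
        (if (comparabilityGraph V).Adj A k then Real.cos (θ A - θ k) else 0) := by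
      simp [hM, kuramotoHessian]
    have hsplit : ∀ k ∈ Finset.univ.erase A,
        (if (comparabilityGraph V).Adj A k then Real.cos (θ A - θ k) else 0)
        = (if A < k then Real.cos (θ A - θ k) else 0)
          + (if k < A then Real.cos (θ A - θ k) else 0) := by
      intro k _
      show (if (A < k ∨ k < A) then Real.cos (θ A - θ k) else 0) = _
      by_cases h1 : A < k
      · have h2 : ¬ k < A := asymm h1
        simp [h1, h2]
      · by_cases h2 : k < A <;> simp [h1, h2]
    have e1 : ∑ k ∈ Finset.univ.erase A, (if A < k then Real.cos (θ A - θ k) else 0) = -1 := by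
      rw [Finset.sum_subset (Finset.erase_subset A Finset.univ)
        (fun k _ hk => by
          have hkA : k = A := by simpa using hk
          simp [hkA]), ← Finset.sum_filter, key A, sub_self, Real.cos_zero]
    have e2 : ∑ k ∈ Finset.univ.erase A, (if k < A then Real.cos (θ A - θ k) else 0)
        = ∑ k ∈ T.erase A, Real.cos (θ A - θ k) := by
      rw [Finset.sum_subset (Finset.erase_subset A Finset.univ)
        (fun k _ hk => by
          have hkA : k = A := by simpa using hk
          simp [hkA]), ← Finset.sum_filter]
      refine Finset.sum_congr ?_ fun _ _ => rfl
      ext k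
      simp only [Finset.mem_filter, Finset.mem_univ, true_and, Finset.mem_erase, hT]
      constructor
      · intro h; exact ⟨h.ne, h.le⟩
      · rintro ⟨hne, hle⟩; exact lt_of_le_of_ne hle hne
    rw [hMA, Finset.sum_congr rfl hsplit, Finset.sum_add_distrib, e1, e2]
  -- PSD: diagonal entry nonneg
  have hdiagnn : 0 ≤ M A A := by
    have h := hpsd.dotProduct_mulVec_nonneg (Pi.single A (1:ℝ))
    have hval : dotProduct (star (Pi.single A (1:ℝ))) (M.mulVec (Pi.single A (1:ℝ))) = M A A := by
      simp [dotProduct, Matrix.mulVec, Pi.single_apply, apply_ite, mul_ite, ite_mul,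
        mul_one, mul_zero, one_mul, zero_mul, Finset.sum_ite_eq', Finset.mem_univ]
    rwa [hval] at h
  -- PSD: quadratic form on indicator of T is nonneg
  set x : V → ℝ := fun v => if v ≤ A then 1 else 0 with hx
  have hstar : star x = x := by
    funext v
    simp [hx]
  have hform : dotProduct (star x) (M.mulVec x) = ∑ i ∈ T, ∑ j ∈ T, M i j := by
    rw [hstar]
    have hmv : ∀ i, (M.mulVec x) i = ∑ j ∈ T, M i j := by
      intro i
      simp only [Matrix.mulVec, dotProduct, hx, mul_ite, mul_one, mul_zero]
      rw [hT, ← Finset.sum_filter]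
    simp only [dotProduct, hmv, hx, ite_mul, one_mul, zero_mul]
    rw [hT, ← Finset.sum_filter]
    exact Finset.sum_congr rfl fun i _ => hmv i
  have hQnn : 0 ≤ ∑ i ∈ T, ∑ j ∈ T, M i j := by
    have h := hpsd.dotProduct_mulVec_nonneg x
    rwa [hform] at h
  -- combine
  have hsame : ∑ k ∈ T.erase A, Real.cos (θ k - θ A)
      = ∑ k ∈ T.erase A, Real.cos (θ A - θ k) := by
    refine Finset.sum_congr rfl fun k _ => ?_
    rw [← Real.cos_neg, neg_sub]
  rw [hQval, hsame] at hQnn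
  rw [hdiagval] at hdiagnn
  linarith
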